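/- In the polynomial ring ℝ[m,u,v], every common divisor of f(m,u,v) and g(m,u,v) is a unit; that is, f and g have no non-constant greatest common divisor. -/
import Mathlib


open MvPolynomial

set_option maxHeartbeats 1600000

/-- `f(m,u,v)` as an element of `ℝ[m,u,v]` (variable `0` is `m`, `1` is `u`, `2` is `v`). -/
noncomputable def fMv : MvPolynomial (Fin 3) ℝ :=
  (2 * X 0 - 2 * X 2) * X 1 ^ 2
    + (3 * X 0 ^ 2 - 7 * X 0 * X 2 - 2 * X 2 ^ 2) * X 1
    + (X 0 ^ 3 + 3 * X 0 ^ 2 * X 2 + 2 * X 0 * X 2 ^ 2)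

/-- `g(m,u,v)` as an element of `ℝ[m,u,v]` (variable `0` is `m`, `1` is `u`, `2` is `v`):
`g = (7mu − 3m² − 4mv + 2u² + 4uv)(m + 2v)(m + v)
  + (4mu + 2uv)(3m² − 7mv + 4mu − 2v² − 4uv)`. -/
noncomputable def gMv : MvPolynomial (Fin 3) ℝ :=
  (7 * X 0 * X 1 - 3 * X 0 ^ 2 - 4 * X 0 * X 2 + 2 * X 1 ^ 2 + 4 * X 1 * X 2)
      * (X 0 + 2 * X 2) * (X 0 + X 2)
    + (4 * X 0 * X 1 + 2 * X 1 * X 2)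
      * (3 * X 0 ^ 2 - 7 * X 0 * X 2 + 4 * X 0 * X 1 - 2 * X 2 ^ 2 - 4 * X 1 * X 2)

private lemma deg0_mul (a b : MvPolynomial (Fin 3) ℝ) (ha : a ≠ 0) (hb : b ≠ 0) :
    degreeOf 0 (a * b) = degreeOf 0 a + degreeOf 0 b := by
  have ea : finSuccEquiv ℝ 2 a ≠ 0 := fun h => ha (by
    have := (finSuccEquiv ℝ 2).injective (h.trans (map_zero (finSuccEquiv ℝ 2)).symm)
    simpa using this)
  have eb : finSuccEquiv ℝ 2 b ≠ 0 := fun h => hb (by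
    have := (finSuccEquiv ℝ 2).injective (h.trans (map_zero (finSuccEquiv ℝ 2)).symm)
    simpa using this)
  rw [← natDegree_finSuccEquiv, ← natDegree_finSuccEquiv, ← natDegree_finSuccEquiv, map_mul,
    Polynomial.natDegree_mul ea eb]

private lemma degreeOf_eq_zero_of_mul_eq (i : Fin 3) (a b R : MvPolynomial (Fin 3) ℝ)
    (h : a * b = R) (hR : R ≠ 0) (hi : degreeOf i R = 0) : degreeOf i a = 0 := by
  have hab : a * b ≠ 0 := h ▸ hR
  have ha : a ≠ 0 := left_ne_zero_of_mul hab
  have hb : b ≠ 0 := right_ne_zero_of_mul hab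
  set σ : Fin 3 ≃ Fin 3 := Equiv.swap i 0 with hσ
  have hinj : Function.Injective (σ : Fin 3 → Fin 3) := σ.injective
  have hra : rename (σ : Fin 3 → Fin 3) a ≠ 0 := fun hh => ha <| by
    have := rename_injective (σ : Fin 3 → Fin 3) hinj (hh.trans (map_zero _).symm)
    simpa using this
  have hrb : rename (σ : Fin 3 → Fin 3) b ≠ 0 := fun hh => hb <| by
    have := rename_injective (σ : Fin 3 → Fin 3) hinj (hh.trans (map_zero _).symm)
    simpa using this
  have h2 : rename (σ : Fin 3 → Fin 3) a * rename (σ : Fin 3 → Fin 3) b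
      = rename (σ : Fin 3 → Fin 3) R := by rw [← map_mul, h]
  have hsum := deg0_mul _ _ hra hrb
  rw [h2] at hsum
  have hRdeg : degreeOf 0 (rename (σ : Fin 3 → Fin 3) R) = 0 := by
    have hd := degreeOf_rename_of_injective hinj i (p := R)
    rw [hσ] at hd ⊢
    rw [show (Equiv.swap i 0 : Fin 3 → Fin 3) i = 0 from Equiv.swap_apply_left i 0] at hd
    rw [hd, hi]
  have hadeg : degreeOf 0 (rename (σ : Fin 3 → Fin 3) a) = 0 := by omega
  have hd := degreeOf_rename_of_injective hinj i (p := a)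
  rw [hσ] at hd
  rw [show (Equiv.swap i 0 : Fin 3 → Fin 3) i = 0 from Equiv.swap_apply_left i 0] at hd
  rw [← hd]
  rw [hσ] at hadeg
  exact hadeg

private lemma degreeOf_rename_eq_zero (g : Fin 2 → Fin 3) (hg : Function.Injective g)
    (i : Fin 3) (hi : ∀ j, g j ≠ i) (S : MvPolynomial (Fin 2) ℝ) :
    degreeOf i (rename g S) = 0 := by
  classical
  rw [degreeOf_def, degrees_rename_of_injective hg, Multiset.count_eq_zero]
  intro hmem
  obtain ⟨j, _, hj⟩ := Multiset.mem_map.mp hmem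
  exact hi j hj

private lemma eq_C_of_degreeOf (p : MvPolynomial (Fin 3) ℝ) (h : ∀ i, degreeOf i p = 0) :
    p = C (coeff 0 p) := by
  ext m
  rcases eq_or_ne m 0 with rfl | hm
  · simp [coeff_C]
  · rw [coeff_C, if_neg (by exact fun hh => hm hh.symm)]
    by_contra hc
    have hmem : m ∈ p.support := mem_support_iff.mpr hc
    apply hm
    ext i
    have h1 := monomial_le_degreeOf i hmem
    rw [h i] at h1
    simpa using Nat.le_zero.mp h1

private lemma block (d : MvPolynomial (Fin 3) ℝ) (i : Fin 3) (g : Fin 2 → Fin 3)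
    (hg : Function.Injective g) (hi : ∀ j, g j ≠ i) (S : MvPolynomial (Fin 2) ℝ)
    (hS : S ≠ 0) (hdvd : d ∣ rename g S) : degreeOf i d = 0 := by
  obtain ⟨e, he⟩ := hdvd
  have hR : rename g S ≠ 0 := fun hh => hS <| by
    have := rename_injective g hg (hh.trans (map_zero _).symm)
    simpa using this
  exact degreeOf_eq_zero_of_mul_eq i d e _ he.symm hR
    (degreeOf_rename_eq_zero g hg i hi S)

private noncomputable def PU : MvPolynomial (Fin 3) ℝ :=
  32 * X 0 ^ 7
    - 72 * X 0 ^ 6 * X 1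
    + 775 * X 0 ^ 6 * X 2
    + 458 * X 0 ^ 5 * X 1 * X 2
    + 332 * X 0 ^ 5 * X 2 ^ 2
    + 128 * X 0 ^ 4 * X 1 * X 2 ^ 2
    - 293 * X 0 ^ 4 * X 2 ^ 3
    - 262 * X 0 ^ 3 * X 1 * X 2 ^ 3
    - 90 * X 0 ^ 3 * X 2 ^ 4
    - 92 * X 0 ^ 2 * X 1 * X 2 ^ 4
    + 40 * X 0 ^ 2 * X 2 ^ 5
    + 40 * X 0 * X 1 * X 2 ^ 5
    - 24 * X 0 * X 2 ^ 6
    + 16 * X 1 * X 2 ^ 6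
    - 16 * X 2 ^ 7

private noncomputable def QU : MvPolynomial (Fin 3) ℝ :=
  8 * X 0 ^ 5 * X 1
    - 127 * X 0 ^ 5 * X 2
    - 58 * X 0 ^ 4 * X 1 * X 2
    + 158 * X 0 ^ 4 * X 2 ^ 2
    + 32 * X 0 ^ 3 * X 1 * X 2 ^ 2
    + 173 * X 0 ^ 3 * X 2 ^ 3
    + 34 * X 0 ^ 2 * X 1 * X 2 ^ 3
    - 32 * X 0 ^ 2 * X 2 ^ 4
    - 8 * X 0 * X 1 * X 2 ^ 4
    - 56 * X 0 * X 2 ^ 5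
    - 8 * X 1 * X 2 ^ 5
    - 8 * X 2 ^ 6

private noncomputable def SU : MvPolynomial (Fin 2) ℝ :=
  32 * X 0 ^ 10
    + 1252 * X 0 ^ 9 * X 1
    + 3898 * X 0 ^ 8 * X 1 ^ 2
    + 1966 * X 0 ^ 7 * X 1 ^ 3
    - 4286 * X 0 ^ 6 * X 1 ^ 4
    - 4610 * X 0 ^ 5 * X 1 ^ 5
    - 140 * X 0 ^ 4 * X 1 ^ 6
    + 1360 * X 0 ^ 3 * X 1 ^ 7
    + 496 * X 0 ^ 2 * X 1 ^ 8
    + 32 * X 0 * X 1 ^ 9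

private lemma SU_ne : SU ≠ 0 := by
  intro h
  have h2 := congrArg (eval ![(-3 : ℝ), -2]) h
  simp only [SU, map_add, map_sub, map_mul, map_pow, map_ofNat, eval_X, map_zero,
    Matrix.cons_val_zero, Matrix.cons_val_one, Matrix.head_cons] at h2
  norm_num at h2

private lemma idU : PU * fMv + QU * gMv = rename ![0, 2] SU := by
  unfold fMv gMv PU QU SU
  simp only [map_add, map_sub, map_mul, map_pow, map_ofNat, rename_X,
    Matrix.cons_val_zero, Matrix.cons_val_one, Matrix.head_cons]
  ring

private noncomputable def PV : MvPolynomial (Fin 3) ℝ :=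
  -24 * X 0 ^ 7 * X 1
    + 971 * X 0 ^ 6 * X 1 ^ 2
    - 128 * X 0 ^ 6 * X 1 * X 2
    + 130 * X 0 ^ 5 * X 1 ^ 3
    + 658 * X 0 ^ 5 * X 1 ^ 2 * X 2
    - 128 * X 0 ^ 5 * X 1 * X 2 ^ 2
    - 477 * X 0 ^ 4 * X 1 ^ 4
    + 30 * X 0 ^ 4 * X 1 ^ 3 * X 2
    + 360 * X 0 ^ 4 * X 1 ^ 2 * X 2 ^ 2
    - 20 * X 0 ^ 3 * X 1 ^ 5
    - 120 * X 0 ^ 3 * X 1 ^ 4 * X 2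
    - 28 * X 0 ^ 3 * X 1 ^ 3 * X 2 ^ 2
    + 56 * X 0 ^ 2 * X 1 ^ 6
    - 4 * X 0 ^ 2 * X 1 ^ 5 * X 2
    - 172 * X 0 ^ 2 * X 1 ^ 4 * X 2 ^ 2
    - 24 * X 0 * X 1 ^ 7
    - 24 * X 0 * X 1 ^ 6 * X 2
    + 24 * X 0 * X 1 ^ 5 * X 2 ^ 2
    - 16 * X 1 ^ 7 * X 2
    + 16 * X 1 ^ 6 * X 2 ^ 2

private noncomputable def QV : MvPolynomial (Fin 3) ℝ :=
  -8 * X 0 ^ 6 * X 1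
    + 185 * X 0 ^ 5 * X 1 ^ 2
    - 32 * X 0 ^ 5 * X 1 * X 2
    - 190 * X 0 ^ 4 * X 1 ^ 3
    + 106 * X 0 ^ 4 * X 1 ^ 2 * X 2
    - 207 * X 0 ^ 3 * X 1 ^ 4
    - 44 * X 0 ^ 3 * X 1 ^ 3 * X 2
    + 40 * X 0 ^ 2 * X 1 ^ 5
    - 58 * X 0 ^ 2 * X 1 ^ 4 * X 2
    + 64 * X 0 * X 1 ^ 6
    + 20 * X 0 * X 1 ^ 5 * X 2
    + 8 * X 1 ^ 7
    + 8 * X 1 ^ 6 * X 2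

private noncomputable def SV : MvPolynomial (Fin 2) ℝ :=
  192 * X 0 ^ 9 * X 1 ^ 2
    + 6936 * X 0 ^ 8 * X 1 ^ 3
    + 2196 * X 0 ^ 7 * X 1 ^ 4
    - 8664 * X 0 ^ 6 * X 1 ^ 5
    - 4116 * X 0 ^ 5 * X 1 ^ 6
    + 2016 * X 0 ^ 4 * X 1 ^ 7
    + 1344 * X 0 ^ 3 * X 1 ^ 8
    + 96 * X 0 ^ 2 * X 1 ^ 9

private lemma SV_ne : SV ≠ 0 := by
  intro h
  have h2 := congrArg (eval ![(-3 : ℝ), -2]) h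
  simp only [SV, map_add, map_sub, map_mul, map_pow, map_ofNat, eval_X, map_zero,
    Matrix.cons_val_zero, Matrix.cons_val_one, Matrix.head_cons] at h2
  norm_num at h2

private lemma idV : PV * fMv + QV * gMv = rename ![0, 1] SV := by
  unfold fMv gMv PV QV SV
  simp only [map_add, map_sub, map_mul, map_pow, map_ofNat, rename_X,
    Matrix.cons_val_zero, Matrix.cons_val_one, Matrix.head_cons]
  ring

private noncomputable def PM : MvPolynomial (Fin 3) ℝ :=
  96 * X 0 ^ 3 * X 1 ^ 6
    - 4542 * X 0 ^ 3 * X 1 ^ 5 * X 2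
    + 22923 * X 0 ^ 3 * X 1 ^ 4 * X 2 ^ 2
    - 19077 * X 0 ^ 3 * X 1 ^ 3 * X 2 ^ 3
    + 6 * X 0 ^ 3 * X 1 ^ 2 * X 2 ^ 4
    - 608 * X 0 ^ 2 * X 1 ^ 7
    + 29278 * X 0 ^ 2 * X 1 ^ 6 * X 2
    - 169673 * X 0 ^ 2 * X 1 ^ 5 * X 2 ^ 2
    + 219992 * X 0 ^ 2 * X 1 ^ 4 * X 2 ^ 3
    - 78697 * X 0 ^ 2 * X 1 ^ 3 * X 2 ^ 4
    + 302 * X 0 ^ 2 * X 1 ^ 2 * X 2 ^ 5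
    - 576 * X 0 * X 1 ^ 8
    + 26548 * X 0 * X 1 ^ 7 * X 2
    - 100892 * X 0 * X 1 ^ 6 * X 2 ^ 2
    + 45859 * X 0 * X 1 ^ 5 * X 2 ^ 3
    + 130331 * X 0 * X 1 ^ 4 * X 2 ^ 4
    - 101050 * X 0 * X 1 ^ 3 * X 2 ^ 5
    + 968 * X 0 * X 1 ^ 2 * X 2 ^ 6
    - 512 * X 1 ^ 8 * X 2
    + 21088 * X 1 ^ 7 * X 2 ^ 2
    + 18964 * X 1 ^ 6 * X 2 ^ 3
    - 96610 * X 1 ^ 5 * X 2 ^ 4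
    + 89954 * X 1 ^ 4 * X 2 ^ 5
    - 33652 * X 1 ^ 3 * X 2 ^ 6
    + 768 * X 1 ^ 2 * X 2 ^ 7

private noncomputable def QM : MvPolynomial (Fin 3) ℝ :=
  32 * X 0 ^ 2 * X 1 ^ 6
    - 1514 * X 0 ^ 2 * X 1 ^ 5 * X 2
    + 7641 * X 0 ^ 2 * X 1 ^ 4 * X 2 ^ 2
    - 6359 * X 0 ^ 2 * X 1 ^ 3 * X 2 ^ 3
    + 2 * X 0 ^ 2 * X 1 ^ 2 * X 2 ^ 4
    + 96 * X 0 * X 1 ^ 7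
    - 4414 * X 0 * X 1 ^ 6 * X 2
    + 16777 * X 0 * X 1 ^ 5 * X 2 ^ 2
    + 3792 * X 0 * X 1 ^ 4 * X 2 ^ 3
    - 17735 * X 0 * X 1 ^ 3 * X 2 ^ 4
    + 98 * X 0 * X 1 ^ 2 * X 2 ^ 5
    + 64 * X 1 ^ 8
    - 3156 * X 1 ^ 7 * X 2
    + 21440 * X 1 ^ 6 * X 2 ^ 2
    - 73741 * X 1 ^ 5 * X 2 ^ 3
    + 63591 * X 1 ^ 4 * X 2 ^ 4
    - 9182 * X 1 ^ 3 * X 2 ^ 5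
    + 192 * X 1 ^ 2 * X 2 ^ 6

private noncomputable def SM : MvPolynomial (Fin 2) ℝ :=
  768 * X 0 ^ 10 * X 1 ^ 2
    - 28272 * X 0 ^ 9 * X 1 ^ 3
    - 178488 * X 0 ^ 8 * X 1 ^ 4
    + 536016 * X 0 ^ 7 * X 1 ^ 5
    - 536016 * X 0 ^ 6 * X 1 ^ 6
    + 178488 * X 0 ^ 5 * X 1 ^ 7
    + 28272 * X 0 ^ 4 * X 1 ^ 8
    - 768 * X 0 ^ 3 * X 1 ^ 9

private lemma SM_ne : SM ≠ 0 := by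
  intro h
  have h2 := congrArg (eval ![(-3 : ℝ), -2]) h
  simp only [SM, map_add, map_sub, map_mul, map_pow, map_ofNat, eval_X, map_zero,
    Matrix.cons_val_zero, Matrix.cons_val_one, Matrix.head_cons] at h2
  norm_num at h2

private lemma idM : PM * fMv + QM * gMv = rename ![1, 2] SM := by
  unfold fMv gMv PM QM SM
  simp only [map_add, map_sub, map_mul, map_pow, map_ofNat, rename_X,
    Matrix.cons_val_zero, Matrix.cons_val_one, Matrix.head_cons]
  ring


/-- In `ℝ[m,u,v]`, every common divisor of `f` and `g` is a unit:
`f` and `g` have no non-constant greatest common divisor. -/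
theorem f_g_no_common_factor :
    ∀ d : MvPolynomial (Fin 3) ℝ, d ∣ fMv → d ∣ gMv → IsUnit d := by
  intro d hdf hdg
  have hu : d ∣ rename ![0, 2] SU := by
    rw [← idU]; exact dvd_add (hdf.mul_left PU) (hdg.mul_left QU)
  have hv : d ∣ rename ![0, 1] SV := by
    rw [← idV]; exact dvd_add (hdf.mul_left PV) (hdg.mul_left QV)
  have hm : d ∣ rename ![1, 2] SM := by
    rw [← idM]; exact dvd_add (hdf.mul_left PM) (hdg.mul_left QM)
  have h1 : degreeOf 1 d = 0 := block d 1 ![0, 2] (by decide) (by decide) SU SU_ne hu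
  have h2 : degreeOf 2 d = 0 := block d 2 ![0, 1] (by decide) (by decide) SV SV_ne hv
  have h0 : degreeOf 0 d = 0 := block d 0 ![1, 2] (by decide) (by decide) SM SM_ne hm
  have hC : d = C (coeff 0 d) := eq_C_of_degreeOf d (fun i => by fin_cases i <;> assumption)
  have hdne : d ≠ 0 := by
    rintro rfl
    obtain ⟨e, he⟩ := hu
    have hz := he.trans (zero_mul e)
    have hSz : SU = (0 : MvPolynomial (Fin 2) ℝ) := by
      have := rename_injective (![0, 2] : Fin 2 → Fin 3) (by decide)
        (hz.trans (map_zero _).symm)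
      simpa using this
    exact SU_ne hSz
  have hcne : coeff 0 d ≠ 0 := fun h => hdne (by rw [hC, h, map_zero])
  rw [hC]
  exact (isUnit_iff_ne_zero.mpr hcne).map C
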